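/- Let Ṁ, M : ℝᵈ → ℝⁿˣⁿ, A : ℝᵈ → ℝⁿˣⁿ, B : ℝᵈ → ℝⁿˣᵐ, and K : ℝᵈ → ℝᵐˣⁿ be matrix-valued functions such that for every X ∈ ℝᵈ the matrix Ṁ(X) + (A(X)+B(X)K(X))ᵀM(X) + M(X)(A(X)+B(X)K(X)) + 2λM(X) is symmetric. Suppose Ṁ, M, A, B, K are Lipschitz continuous (with respect to the Euclidean norm on ℝᵈ and the operator 2-norm on matrices) with Lipschitz constants L_Ṁ, L_M, L_A, L_B, L_K respectively, and that the operator 2-norms of M, A, B, K are uniformly bounded by S_M, S_A, S_B, S_K respectively. Then for any λ ≥ 0, the function X ↦ λ_max( Ṁ(X) + (A(X)+B(X)K(X))ᵀM(X) + M(X)(A(X)+B(X)K(X)) + 2λM(X) ) is Lipschitz continuous with Lipschitz constant L_Ṁ + 2(S_M L_A + S_A L_M + S_M S_B L_K + S_B S_K L_M + S_M S_K L_B + λ L_M). -/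

import Mathlib

open Matrix

/-- The operator 2-norm of a real matrix, i.e. its norm as a linear operator
between Euclidean spaces (the largest singular value). -/
noncomputable def opNorm2 {k l : ℕ} (A : Matrix (Fin k) (Fin l) ℝ) : ℝ :=
  ‖LinearMap.toContinuousLinearMap (Matrix.toEuclideanLin A)‖

/-- The largest eigenvalue of a real symmetric (Hermitian) matrix. -/
noncomputable def lamMax {n : ℕ} (A : Matrix (Fin n) (Fin n) ℝ) : ℝ :=
  if h : A.IsHermitian then ⨆ i, h.eigenvalues i else 0

open scoped Matrix.Norms.L2Operator

lemma opNorm2_eq_norm {k l : ℕ} (A : Matrix (Fin k) (Fin l) ℝ) : opNorm2 A = ‖A‖ := rfl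

lemma opNorm2_nonneg {k l : ℕ} (A : Matrix (Fin k) (Fin l) ℝ) : 0 ≤ opNorm2 A := by
  rw [opNorm2_eq_norm]; exact norm_nonneg _

lemma l2norm_transpose {k l : ℕ} (A : Matrix (Fin k) (Fin l) ℝ) : ‖Aᵀ‖ = ‖A‖ := by
  rw [← Matrix.conjTranspose_eq_transpose_of_trivial, Matrix.l2_opNorm_conjTranspose]

lemma inner_le_lamMax {n : ℕ} (hn : 0 < n) {Q : Matrix (Fin n) (Fin n) ℝ} (hQ : Q.IsHermitian)
    (x : EuclideanSpace ℝ (Fin n)) (hx : ‖x‖ = 1) :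
    inner ℝ x (Matrix.toEuclideanLin Q x) ≤ lamMax Q := by
  haveI : Nonempty (Fin n) := Fin.pos_iff_nonempty.mp hn
  set b := hQ.eigenvectorBasis with hb
  have hsym := (Matrix.isHermitian_iff_isSymmetric.mp hQ)
  have key : ∀ i, Matrix.toEuclideanLin Q (b i) = hQ.eigenvalues i • (b i) := by
    intro i
    ext j
    have := congrFun (hQ.mulVec_eigenvectorBasis i) j
    simpa [Matrix.toEuclideanLin_apply] using this
  have expand : (inner ℝ x (Matrix.toEuclideanLin Q x) : ℝ)
      = ∑ i, hQ.eigenvalues i * (inner ℝ x (b i) * inner ℝ (b i) x : ℝ) := by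
    rw [← b.sum_inner_mul_inner x (Matrix.toEuclideanLin Q x)]
    congr 1; ext i
    rw [← hsym (b i) x, key i, real_inner_smul_left]
    ring
  have hL : ∀ i, hQ.eigenvalues i ≤ lamMax Q := by
    intro i
    rw [lamMax, dif_pos hQ]
    exact le_ciSup (Set.Finite.bddAbove (Set.finite_range _)) i
  have parseval : ∑ i, (inner ℝ x (b i) * inner ℝ (b i) x : ℝ) = 1 := by
    rw [b.sum_inner_mul_inner x x, real_inner_self_eq_norm_sq, hx]; norm_num
  calc (inner ℝ x (Matrix.toEuclideanLin Q x) : ℝ)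
      = ∑ i, hQ.eigenvalues i * (inner ℝ x (b i) * inner ℝ (b i) x : ℝ) := expand
    _ ≤ ∑ i, lamMax Q * (inner ℝ x (b i) * inner ℝ (b i) x : ℝ) := by
        apply Finset.sum_le_sum
        intro i _
        have hnn : (0:ℝ) ≤ inner ℝ x (b i) * inner ℝ (b i) x := by
          rw [real_inner_comm (b i) x]; exact mul_self_nonneg _
        exact mul_le_mul_of_nonneg_right (hL i) hnn
    _ = lamMax Q := by rw [← Finset.mul_sum, parseval, mul_one]

lemma lamMax_le_lamMax_add {n : ℕ} {P Q : Matrix (Fin n) (Fin n) ℝ}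
    (hP : P.IsHermitian) (hQ : Q.IsHermitian) :
    lamMax P ≤ lamMax Q + opNorm2 (P - Q) := by
  rcases Nat.eq_zero_or_pos n with h0 | hn
  · subst h0
    have h1 : lamMax P = 0 := by rw [lamMax, dif_pos hP, Real.iSup_of_isEmpty]
    have h2 : lamMax Q = 0 := by rw [lamMax, dif_pos hQ, Real.iSup_of_isEmpty]
    rw [h1, h2, zero_add]
    exact opNorm2_nonneg _
  · haveI : Nonempty (Fin n) := Fin.pos_iff_nonempty.mp hn
    rw [lamMax, dif_pos hP]
    apply ciSup_le
    intro i
    set v := hP.eigenvectorBasis i with hv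
    have hvn : ‖v‖ = 1 := hP.eigenvectorBasis.orthonormal.1 i
    have hPv : Matrix.toEuclideanLin P v = hP.eigenvalues i • v := by
      ext j
      have := congrFun (hP.mulVec_eigenvectorBasis i) j
      simpa [Matrix.toEuclideanLin_apply] using this
    have h1 : hP.eigenvalues i = inner ℝ v (Matrix.toEuclideanLin P v) := by
      rw [hPv, real_inner_smul_right, real_inner_self_eq_norm_sq, hvn]; ring
    have h2 : Matrix.toEuclideanLin P v
        = Matrix.toEuclideanLin Q v + Matrix.toEuclideanLin (P - Q) v := by
      rw [map_sub]; simp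
    have h3 : (inner ℝ v (Matrix.toEuclideanLin (P - Q) v) : ℝ) ≤ opNorm2 (P - Q) := by
      calc (inner ℝ v (Matrix.toEuclideanLin (P - Q) v) : ℝ)
          ≤ ‖v‖ * ‖Matrix.toEuclideanLin (P - Q) v‖ := real_inner_le_norm _ _
        _ ≤ ‖v‖ * (opNorm2 (P - Q) * ‖v‖) := by
            have hop : ‖Matrix.toEuclideanLin (P - Q) v‖ ≤ opNorm2 (P - Q) * ‖v‖ :=
              (LinearMap.toContinuousLinearMap (Matrix.toEuclideanLin (P - Q))).le_opNorm v
            exact mul_le_mul_of_nonneg_left hop (norm_nonneg v)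
        _ = opNorm2 (P - Q) := by rw [hvn]; ring
    have h4 := inner_le_lamMax hn hQ v hvn
    rw [h1, h2, inner_add_right]
    linarith

lemma abs_lamMax_sub_le {n : ℕ} {P Q : Matrix (Fin n) (Fin n) ℝ}
    (hP : P.IsHermitian) (hQ : Q.IsHermitian) :
    |lamMax P - lamMax Q| ≤ opNorm2 (P - Q) := by
  rw [abs_sub_le_iff]
  constructor
  · linarith [lamMax_le_lamMax_add hP hQ]
  · have h := lamMax_le_lamMax_add hQ hP
    have : opNorm2 (Q - P) = opNorm2 (P - Q) := by
      rw [opNorm2_eq_norm, opNorm2_eq_norm, norm_sub_rev]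
    linarith

/-- Proposition 2: if `Ṁ, M, A, B, K` are Lipschitz continuous (w.r.t. the Euclidean norm on
`ℝᵈ` and the operator 2-norm on matrices) with constants `L_Ṁ, L_M, L_A, L_B, L_K`, the operator
2-norms of `M, A, B, K` are uniformly bounded by `S_M, S_A, S_B, S_K`, and
`Ṁ(X) + (A(X)+B(X)K(X))ᵀM(X) + M(X)(A(X)+B(X)K(X)) + 2λM(X)` is symmetric for every `X`, then
for `λ ≥ 0` the function `X ↦ λ_max(Ṁ(X) + (A+BK)ᵀM + M(A+BK) + 2λM)` is Lipschitz with
constant `L_Ṁ + 2(S_M L_A + S_A L_M + S_M S_B L_K + S_B S_K L_M + S_M S_K L_B + λ L_M)`. -/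
theorem lamMax_contraction_condition_lipschitz {d n m : ℕ} (lam : ℝ) (hlam : 0 ≤ lam)
    (Mdot M A : EuclideanSpace ℝ (Fin d) → Matrix (Fin n) (Fin n) ℝ)
    (B : EuclideanSpace ℝ (Fin d) → Matrix (Fin n) (Fin m) ℝ)
    (K : EuclideanSpace ℝ (Fin d) → Matrix (Fin m) (Fin n) ℝ)
    (LMdot LM LA LB LK SM SA SB SK : ℝ)
    (hLMdot : ∀ X Y, opNorm2 (Mdot X - Mdot Y) ≤ LMdot * ‖X - Y‖)
    (hLM : ∀ X Y, opNorm2 (M X - M Y) ≤ LM * ‖X - Y‖)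
    (hLA : ∀ X Y, opNorm2 (A X - A Y) ≤ LA * ‖X - Y‖)
    (hLB : ∀ X Y, opNorm2 (B X - B Y) ≤ LB * ‖X - Y‖)
    (hLK : ∀ X Y, opNorm2 (K X - K Y) ≤ LK * ‖X - Y‖)
    (hSM : ∀ X, opNorm2 (M X) ≤ SM)
    (hSA : ∀ X, opNorm2 (A X) ≤ SA)
    (hSB : ∀ X, opNorm2 (B X) ≤ SB)
    (hSK : ∀ X, opNorm2 (K X) ≤ SK)
    (hsym : ∀ X, (Mdot X + (A X + B X * K X)ᵀ * M X + M X * (A X + B X * K X)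
      + (2 * lam) • M X).IsHermitian) :
    ∀ X Y,
      |lamMax (Mdot X + (A X + B X * K X)ᵀ * M X + M X * (A X + B X * K X)
          + (2 * lam) • M X)
        - lamMax (Mdot Y + (A Y + B Y * K Y)ᵀ * M Y + M Y * (A Y + B Y * K Y)
          + (2 * lam) • M Y)|
      ≤ (LMdot + 2 * (SM * LA + SA * LM + SM * SB * LK + SB * SK * LM + SM * SK * LB
          + lam * LM)) * ‖X - Y‖ := by
  intro X Y
  simp only [opNorm2_eq_norm] at hLMdot hLM hLA hLB hLK hSM hSA hSB hSK
  refine (abs_lamMax_sub_le (hsym X) (hsym Y)).trans ?_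
  rw [opNorm2_eq_norm]
  set r := ‖X - Y‖ with hr
  have hr0 : (0:ℝ) ≤ r := norm_nonneg _
  set GX := A X + B X * K X with hGX
  set GY := A Y + B Y * K Y with hGY
  -- bound on GX - GY
  have hGd : ‖GX - GY‖ ≤ (LA + SB * LK + LB * SK) * r := by
    have e : GX - GY = (A X - A Y) + (B X * (K X - K Y) + (B X - B Y) * K Y) := by
      rw [hGX, hGY]
      simp only [Matrix.mul_sub, Matrix.sub_mul]
      abel
    rw [e]
    calc ‖(A X - A Y) + (B X * (K X - K Y) + (B X - B Y) * K Y)‖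
        ≤ ‖A X - A Y‖ + (‖B X * (K X - K Y)‖ + ‖(B X - B Y) * K Y‖) := by
          exact (norm_add_le _ _).trans (by gcongr; exact norm_add_le _ _)
      _ ≤ LA * r + (SB * (LK * r) + LB * r * SK) := by
          gcongr
          · exact hLA X Y
          · exact (Matrix.l2_opNorm_mul _ _).trans
              (mul_le_mul (hSB X) (hLK X Y) (norm_nonneg _)
                ((norm_nonneg _).trans (hSB X)))
          · exact (Matrix.l2_opNorm_mul _ _).trans
              (mul_le_mul (hLB X Y) (hSK Y) (norm_nonneg _)
                ((norm_nonneg _).trans (hLB X Y)))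
      _ = (LA + SB * LK + LB * SK) * r := by ring
  have hGY' : ‖GY‖ ≤ SA + SB * SK := by
    calc ‖GY‖ ≤ ‖A Y‖ + ‖B Y * K Y‖ := norm_add_le _ _
      _ ≤ SA + SB * SK := by
          gcongr
          · exact hSA Y
          · exact (Matrix.l2_opNorm_mul _ _).trans
              (mul_le_mul (hSB Y) (hSK Y) (norm_nonneg _) ((norm_nonneg _).trans (hSB Y)))
  have hGd0 : (0:ℝ) ≤ (LA + SB * LK + LB * SK) * r := (norm_nonneg _).trans hGd
  have hGY0 : (0:ℝ) ≤ SA + SB * SK := (norm_nonneg _).trans hGY'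
  -- decompose the difference
  have edec : (Mdot X + GXᵀ * M X + M X * GX + (2 * lam) • M X)
      - (Mdot Y + GYᵀ * M Y + M Y * GY + (2 * lam) • M Y)
      = (Mdot X - Mdot Y) + ((GX - GY)ᵀ * M X + GYᵀ * (M X - M Y))
        + (M X * (GX - GY) + (M X - M Y) * GY) + (2 * lam) • (M X - M Y) := by
    simp only [Matrix.transpose_sub, Matrix.sub_mul, Matrix.mul_sub, smul_sub]
    abel
  rw [edec]
  have b2 : ‖(GX - GY)ᵀ * M X + GYᵀ * (M X - M Y)‖
      ≤ (LA + SB * LK + LB * SK) * r * SM + (SA + SB * SK) * (LM * r) := by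
    calc ‖(GX - GY)ᵀ * M X + GYᵀ * (M X - M Y)‖
        ≤ ‖(GX - GY)ᵀ * M X‖ + ‖GYᵀ * (M X - M Y)‖ := norm_add_le _ _
      _ ≤ (LA + SB * LK + LB * SK) * r * SM + (SA + SB * SK) * (LM * r) := by
          gcongr
          · exact (Matrix.l2_opNorm_mul _ _).trans
              (mul_le_mul (by rw [l2norm_transpose]; exact hGd) (hSM X) (norm_nonneg _) hGd0)
          · exact (Matrix.l2_opNorm_mul _ _).trans
              (mul_le_mul (by rw [l2norm_transpose]; exact hGY') (hLM X Y) (norm_nonneg _) hGY0)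
  have b3 : ‖M X * (GX - GY) + (M X - M Y) * GY‖
      ≤ SM * ((LA + SB * LK + LB * SK) * r) + LM * r * (SA + SB * SK) := by
    calc ‖M X * (GX - GY) + (M X - M Y) * GY‖
        ≤ ‖M X * (GX - GY)‖ + ‖(M X - M Y) * GY‖ := norm_add_le _ _
      _ ≤ SM * ((LA + SB * LK + LB * SK) * r) + LM * r * (SA + SB * SK) := by
          gcongr
          · exact (Matrix.l2_opNorm_mul _ _).trans
              (mul_le_mul (hSM X) hGd (norm_nonneg _) ((norm_nonneg _).trans (hSM X)))
          · exact (Matrix.l2_opNorm_mul _ _).trans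
              (mul_le_mul (hLM X Y) hGY' (norm_nonneg _) ((norm_nonneg _).trans (hLM X Y)))
  have b4 : ‖(2 * lam) • (M X - M Y)‖ ≤ 2 * lam * (LM * r) := by
    rw [norm_smul, Real.norm_eq_abs, abs_of_nonneg (by linarith)]
    exact mul_le_mul_of_nonneg_left (hLM X Y) (by linarith)
  have tri : ‖(Mdot X - Mdot Y) + ((GX - GY)ᵀ * M X + GYᵀ * (M X - M Y))
        + (M X * (GX - GY) + (M X - M Y) * GY) + (2 * lam) • (M X - M Y)‖
      ≤ ‖Mdot X - Mdot Y‖ + ‖(GX - GY)ᵀ * M X + GYᵀ * (M X - M Y)‖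
        + ‖M X * (GX - GY) + (M X - M Y) * GY‖ + ‖(2 * lam) • (M X - M Y)‖ :=
    le_trans (norm_add_le _ _) (add_le_add_left
      (le_trans (norm_add_le _ _) (add_le_add_left (norm_add_le _ _) _)) _)
  have hsum := add_le_add (add_le_add (add_le_add (hLMdot X Y) b2) b3) b4
  refine (tri.trans hsum).trans (le_of_eq ?_)
  ring
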